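/- For the hypercube graph Q_m on 2^m vertices, the minimum membership dimension of a good system of categories equals m. -/

import Mathlib

open Finset SimpleGraph

variable {V : Type*}

def catDist [DecidableEq V] (S : Finset (Finset V)) (s t : V) : ℕ :=
  (S.filter fun C => t ∈ C ∧ s ∉ C).card

def IsGoodSystem [DecidableEq V] (G : SimpleGraph V) (S : Finset (Finset V)) : Prop :=
  (∀ C ∈ S, (G.induce (C : Set V)).Connected) ∧
    ∀ s t : V, s ≠ t → ∃ u, G.Adj s u ∧ catDist S u t < catDist S s t

def memdim [DecidableEq V] [Fintype V] (S : Finset (Finset V)) : ℕ :=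
  univ.sup fun v : V => (S.filter fun C => v ∈ C).card

noncomputable def graphDiam [Fintype V] (G : SimpleGraph V) : ℕ :=
  univ.sup fun p : V × V => G.dist p.1 p.2

noncomputable def minMemdim (V : Type*) [DecidableEq V] [Fintype V] (G : SimpleGraph V) : ℕ :=
  sInf {m | ∃ S : Finset (Finset V), IsGoodSystem G S ∧ memdim S = m}

def hypercube (m : ℕ) : SimpleGraph (Fin m → Bool) where
  Adj x y := hammingDist x y = 1
  symm := ⟨fun x y (h : hammingDist x y = 1) => show hammingDist y x = 1 by rwa [hammingDist_comm]⟩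
  loopless := ⟨fun x (h : hammingDist x x = 1) => by simp [hammingDist_self] at h⟩

/-! ### Auxiliary material -/

open Function

def cat (m : ℕ) (p : Fin m × Bool) : Finset (Fin m → Bool) :=
  univ.filter fun x => x p.1 = p.2

lemma mem_cat {m : ℕ} {p : Fin m × Bool} {x : Fin m → Bool} :
    x ∈ cat m p ↔ x p.1 = p.2 := by simp [cat]

def sys (m : ℕ) : Finset (Finset (Fin m → Bool)) := univ.image (cat m)

lemma hypercube_adj_update {m : ℕ} {s : Fin m → Bool} {j : Fin m} {b : Bool}
    (h : s j ≠ b) : (hypercube m).Adj s (update s j b) := by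
  show hammingDist s (update s j b) = 1
  unfold hammingDist
  rw [show (univ.filter fun i => s i ≠ update s j b i) = {j} from ?_]
  · exact card_singleton j
  · ext i
    simp only [mem_filter, mem_univ, true_and, mem_singleton]
    rcases eq_or_ne i j with rfl | hij
    · simp [h]
    · simp [Function.update_of_ne hij, hij]

lemma hamming_update_lt {m : ℕ} {s t : Fin m → Bool} {j : Fin m} (h : s j ≠ t j) :
    hammingDist (update s j (t j)) t < hammingDist s t := by
  unfold hammingDist
  apply card_lt_card
  rw [Finset.ssubset_iff_of_subset]
  · exact ⟨j, by simp [h], by simp⟩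
  · intro i hi
    simp only [mem_filter, mem_univ, true_and] at hi ⊢
    rcases eq_or_ne i j with rfl | hij
    · simp at hi
    · rwa [Function.update_of_ne hij] at hi

lemma hamming_le_catDist {m : ℕ} {S : Finset (Finset (Fin m → Bool))}
    (hS : IsGoodSystem (hypercube m) S) :
    ∀ s t : Fin m → Bool, hammingDist s t ≤ catDist S s t := by
  suffices H : ∀ n (s t : Fin m → Bool), catDist S s t = n →
      hammingDist s t ≤ catDist S s t by
    exact fun s t => H _ s t rfl
  intro n
  induction n using Nat.strong_induction_on with
  | _ n IH =>
    intro s t hn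
    rcases eq_or_ne s t with rfl | hst
    · simp [hammingDist_self]
    · obtain ⟨u, hadj, hlt⟩ := hS.2 s t hst
      have h1 : hammingDist s u = 1 := hadj
      have h2 : hammingDist u t ≤ catDist S u t :=
        IH (catDist S u t) (hn ▸ hlt) u t rfl
      have h3 := hammingDist_triangle s u t
      omega

lemma catDist_le_memdim [DecidableEq V] [Fintype V] (S : Finset (Finset V)) (s t : V) :
    catDist S s t ≤ memdim S := by
  refine le_trans (Finset.card_le_card ?_) (Finset.le_sup (f := fun v : V => (S.filter fun C => v ∈ C).card) (mem_univ t))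
  intro C hC
  simp only [mem_filter] at hC ⊢
  exact ⟨hC.1, hC.2.1⟩

lemma cat_reach (m : ℕ) (p : Fin m × Bool) :
    ∀ n (u v : ((cat m p : Finset (Fin m → Bool)) : Set (Fin m → Bool))),
      hammingDist u.1 v.1 ≤ n →
      ((hypercube m).induce ((cat m p : Finset (Fin m → Bool)) : Set (Fin m → Bool))).Reachable u v := by
  intro n
  induction n with
  | zero =>
    intro u v h
    have : u.1 = v.1 := hammingDist_eq_zero.mp (Nat.le_zero.mp h)
    rw [Subtype.ext this]
  | succ n IH =>
    intro u v h
    rcases eq_or_ne u.1 v.1 with he | hne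
    · rw [Subtype.ext he]
    · obtain ⟨j, hj⟩ : ∃ j, u.1 j ≠ v.1 j := by
        by_contra hc; push_neg at hc; exact hne (funext hc)
      have hu : u.1 p.1 = p.2 := mem_cat.mp (Finset.mem_coe.mp u.2)
      have hv : v.1 p.1 = p.2 := mem_cat.mp (Finset.mem_coe.mp v.2)
      have hjp : j ≠ p.1 := by
        rintro rfl; exact hj (hu.trans hv.symm)
      have hw : update u.1 j (v.1 j) ∈ cat m p := by
        rw [mem_cat, Function.update_of_ne (Ne.symm hjp)]; exact hu
      have hadj : ((hypercube m).induce
          ((cat m p : Finset (Fin m → Bool)) : Set (Fin m → Bool))).Adj u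
          ⟨update u.1 j (v.1 j), Finset.mem_coe.mpr hw⟩ :=
        hypercube_adj_update hj
      refine hadj.reachable.trans (IH ⟨update u.1 j (v.1 j), Finset.mem_coe.mpr hw⟩ v ?_)
      show hammingDist (update u.1 j (v.1 j)) v.1 ≤ n
      have := hamming_update_lt hj
      omega

lemma sys_good (m : ℕ) : IsGoodSystem (hypercube m) (sys m) := by
  constructor
  · intro C hC
    obtain ⟨p, -, rfl⟩ := Finset.mem_image.mp hC
    rw [connected_iff]
    constructor
    · intro u v
      exact cat_reach m p (hammingDist u.1 v.1) u v le_rfl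
    · exact ⟨⟨fun _ => p.2, Finset.mem_coe.mpr (mem_cat.mpr rfl)⟩⟩
  · intro s t hst
    obtain ⟨j, hj⟩ : ∃ j, s j ≠ t j := by
      by_contra hc; push_neg at hc; exact hst (funext hc)
    refine ⟨update s j (t j), hypercube_adj_update hj, ?_⟩
    unfold catDist
    apply card_lt_card
    rw [Finset.ssubset_iff_of_subset]
    · refine ⟨cat m (j, t j), ?_, ?_⟩
      · simp only [mem_filter]
        refine ⟨Finset.mem_image.mpr ⟨(j, t j), mem_univ _, rfl⟩, mem_cat.mpr rfl, ?_⟩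
        rw [mem_cat]; exact hj
      · simp only [mem_filter, not_and, not_not]
        intro _ _
        rw [mem_cat]; simp
    · intro C hC
      simp only [mem_filter] at hC ⊢
      obtain ⟨hCS, htC, huC⟩ := hC
      refine ⟨hCS, htC, ?_⟩
      obtain ⟨p, -, rfl⟩ := Finset.mem_image.mp hCS
      rw [mem_cat] at htC ⊢
      intro hs
      apply huC
      rw [mem_cat]
      rcases eq_or_ne p.1 j with hpj | hpj
      · rw [hpj, Function.update_self, ← hpj, htC]
      · rwa [Function.update_of_ne hpj]

lemma memdim_sys_le (m : ℕ) : memdim (sys m) ≤ m := by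
  unfold memdim
  apply Finset.sup_le
  intro v _
  calc ((sys m).filter fun C => v ∈ C).card
      ≤ ((univ.filter fun p : Fin m × Bool => v p.1 = p.2).image (cat m)).card := by
        apply card_le_card
        intro C hC
        simp only [mem_filter] at hC
        obtain ⟨hCS, hv⟩ := hC
        obtain ⟨p, -, rfl⟩ := Finset.mem_image.mp hCS
        exact Finset.mem_image.mpr ⟨p, Finset.mem_filter.mpr ⟨mem_univ _, mem_cat.mp hv⟩, rfl⟩
    _ ≤ (univ.filter fun p : Fin m × Bool => v p.1 = p.2).card := card_image_le
    _ = m := by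
        rw [show (univ.filter fun p : Fin m × Bool => v p.1 = p.2)
            = univ.image (fun i : Fin m => (i, v i)) from ?_]
        · rw [Finset.card_image_of_injective _ (fun a b hab => (Prod.ext_iff.mp hab).1),
            card_univ, Fintype.card_fin]
        · ext p
          simp only [mem_filter, mem_univ, true_and, Finset.mem_image, Prod.ext_iff]
          constructor
          · intro h; exact ⟨p.1, h ▸ ⟨rfl, rfl⟩⟩
          · rintro ⟨i, hi1, hi2⟩; rw [← hi1, ← hi2]

theorem stmt5 (m : ℕ) : minMemdim (Fin m → Bool) (hypercube m) = m := by
  have hlb : ∀ S : Finset (Finset (Fin m → Bool)),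
      IsGoodSystem (hypercube m) S → m ≤ memdim S := by
    intro S hS
    have h1 := hamming_le_catDist hS (fun _ => false) (fun _ => true)
    have h2 := catDist_le_memdim S (fun _ => false) (fun _ => true)
    have h3 : hammingDist (fun _ : Fin m => false) (fun _ : Fin m => true) = m := by
      unfold hammingDist
      simp
    omega
  have hmemdim : memdim (sys m) = m :=
    le_antisymm (memdim_sys_le m) (hlb _ (sys_good m))
  unfold minMemdim
  apply le_antisymm
  · exact Nat.sInf_le (show ∃ S, IsGoodSystem (hypercube m) S ∧ memdim S = m from
      ⟨sys m, sys_good m, hmemdim⟩)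
  · refine le_csInf ⟨m, ⟨sys m, sys_good m, hmemdim⟩⟩ ?_
    rintro k ⟨S, hS, rfl⟩
    exact hlb S hS
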